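/- Let p > 1, l,d ∈ ℕ₊, and A₁,…,A_l ∈ ℂ^{d×d}. Let ω = (ω₁,…,ω_l) ∈ (ℝ²)^l with |ω| = 1 and X = (X₁,…,X_l) ∈ (ℝ^{2d})^l. Setting σ_j = e^{-i arg ω_j} V_d^{-1}(X_j) ∈ ℂ^d, one has p^{-1} H^{(A₁,…,A_l)}_{F_p}[ω; X] = Σ_{j=1}^l Re⟨A_j σ_j, σ_j⟩ + (p−2) Σ_{j,k=1}^l |ω_j||ω_k| Re⟨A_j σ_j, Re σ_k⟩. -/

import Mathlib

open scoped ComplexConjugate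

noncomputable def Ip (p : ℝ) {d : ℕ} (ξ : EuclideanSpace ℂ (Fin d)) : EuclideanSpace ℂ (Fin d) :=
  WithLp.toLp 2 (fun i => ξ i + ((1 - 2 / p : ℝ) : ℂ) * conj (ξ i))

noncomputable def mulVecE {d : ℕ} (A : Matrix (Fin d) (Fin d) ℂ)
    (ξ : EuclideanSpace ℂ (Fin d)) : EuclideanSpace ℂ (Fin d) :=
  WithLp.toLp 2 (fun i => ∑ j, A i j * ξ j)

noncomputable def Delta (p : ℝ) {d : ℕ} (A : Matrix (Fin d) (Fin d) ℂ) : ℝ :=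
  sInf { r : ℝ | ∃ ξ : EuclideanSpace ℂ (Fin d), ‖ξ‖ = 1 ∧
    r = (@inner ℂ _ _ (mulVecE A ξ) (Ip p ξ)).re }

/-- The real form `M(A) = [[Re A, −Im A],[Im A, Re A]]` of a complex matrix, as a function on
`(Fin 2 × Fin d) × (Fin 2 × Fin d)`; the first coordinate `0` indexes the "real" block and `1`
the "imaginary" block. -/
noncomputable def realForm {d : ℕ} (A : Matrix (Fin d) (Fin d) ℂ) :
    (Fin 2 × Fin d) → (Fin 2 × Fin d) → ℝ := fun x y =>
  if x.1 = 0 then (if y.1 = 0 then (A x.2 y.2).re else -((A x.2 y.2).im))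
  else (if y.1 = 0 then (A x.2 y.2).im else (A x.2 y.2).re)

/-- Entries of the Hessian matrix `D²Φ(ω)` of a function on a Euclidean space. -/
noncomputable def hessE {ι : Type*} [Fintype ι] [DecidableEq ι]
    (Φ : EuclideanSpace ℝ ι → ℝ) (ω : EuclideanSpace ℝ ι) (i j : ι) : ℝ :=
  iteratedFDeriv ℝ 2 Φ ω ![EuclideanSpace.single i 1, EuclideanSpace.single j 1]

/-- Generalized Hessian quadratic form
`H^{(A₁,…,A_l)}_Φ[ω;X] = ⟨(M(A₁*)⊕⋯⊕M(A_l*))·((D²Φ)(ω)⊗I_{ℝ^d}) X, X⟩`. -/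
noncomputable def genHess {l d : ℕ} (A : Fin l → Matrix (Fin d) (Fin d) ℂ)
    (Φ : EuclideanSpace ℝ (Fin l × Fin 2) → ℝ) (ω : EuclideanSpace ℝ (Fin l × Fin 2))
    (X : Fin l × Fin 2 × Fin d → ℝ) : ℝ :=
  ∑ j, ∑ a, ∑ m, (∑ b, ∑ n, realForm (A j).conjTranspose (a, m) (b, n) *
      (∑ k, ∑ c, hessE Φ ω (j, b) (k, c) * X (k, c, n))) * X (j, a, m)

/-- Generalized Hessian quadratic form for a single matrix (functions on `ℝ²`):
`H^A_Φ[ζ;X] = ⟨M(A*)·((D²Φ)(ζ)⊗I_{ℝ^d}) X, X⟩`. -/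
noncomputable def genHess1 {d : ℕ} (A : Matrix (Fin d) (Fin d) ℂ)
    (Φ : EuclideanSpace ℝ (Fin 2) → ℝ) (ζ : EuclideanSpace ℝ (Fin 2))
    (X : Fin 2 × Fin d → ℝ) : ℝ :=
  ∑ a, ∑ m, (∑ b, ∑ n, realForm A.conjTranspose (a, m) (b, n) *
      (∑ c, hessE Φ ζ b c * X (c, n))) * X (a, m)

/-- The identification `V_d : ℂ^d → ℝ^{2d}`. -/
noncomputable def Vd {d : ℕ} (ξ : EuclideanSpace ℂ (Fin d)) : Fin 2 × Fin d → ℝ :=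
  fun x => if x.1 = 0 then (ξ x.2).re else (ξ x.2).im

-- AUX LEMMAS (to be inserted before stmt8)
section auxHess

open scoped RealInnerProductSpace

variable {ι : Type*} [Fintype ι] [DecidableEq ι]

noncomputable def SqE (w : EuclideanSpace ℝ ι) : ℝ := ⟪w, w⟫

omit [DecidableEq ι] in
lemma hasFDerivAt_SqE (w : EuclideanSpace ℝ ι) :
    HasFDerivAt SqE ((2:ℝ) • (innerSL ℝ w)) w := by
  have h := (hasFDerivAt_id w).inner ℝ (hasFDerivAt_id w)
  refine h.congr_fderiv ?_
  ext u
  simp only [ContinuousLinearMap.smul_apply, innerSL_apply_apply, fderivInnerCLM_apply,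
    ContinuousLinearMap.coe_comp', Function.comp_apply, ContinuousLinearMap.prod_apply,
    ContinuousLinearMap.coe_id', id_eq, smul_eq_mul]
  rw [real_inner_comm (x := u)]
  ring

omit [DecidableEq ι] in
lemma norm_rpow_eq_SqE (p : ℝ) (w : EuclideanSpace ℝ ι) : ‖w‖ ^ p = (SqE w) ^ (p/2) := by
  have h1 : SqE w = ‖w‖ ^ (2:ℕ) := real_inner_self_eq_norm_sq w
  rw [h1, ← Real.rpow_natCast ‖w‖ 2, ← Real.rpow_mul (norm_nonneg w)]
  congr 1; ring

omit [DecidableEq ι] in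
lemma SqE_ne_zero {w : EuclideanSpace ℝ ι} (hw : w ≠ 0) : SqE w ≠ 0 := by
  simp only [SqE]
  rw [real_inner_self_eq_norm_sq]
  have : ‖w‖ ≠ 0 := norm_ne_zero_iff.2 hw
  positivity

omit [DecidableEq ι] in
lemma hasFDerivAt_normRpow (p : ℝ) (w : EuclideanSpace ℝ ι) (hw : w ≠ 0) :
    HasFDerivAt (fun w : EuclideanSpace ℝ ι => ‖w‖ ^ p)
      ((p * (SqE w) ^ (p/2 - 1)) • innerSL ℝ w) w := by
  have h := (Real.hasDerivAt_rpow_const (p := p/2) (Or.inl (SqE_ne_zero hw))).comp_hasFDerivAt w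
    (hasFDerivAt_SqE w)
  have heq : (fun w : EuclideanSpace ℝ ι => ‖w‖ ^ p)
      = fun w : EuclideanSpace ℝ ι => (SqE w) ^ (p/2) := by
    funext w; exact norm_rpow_eq_SqE p w
  rw [heq]
  refine h.congr_fderiv ?_
  ext u
  simp only [ContinuousLinearMap.smul_apply, innerSL_apply_apply, smul_eq_mul]
  ring

omit [DecidableEq ι] in
lemma fderiv_fderiv_normRpow (p : ℝ) (ω : EuclideanSpace ℝ ι) (hω : ‖ω‖ = 1)
    (u v : EuclideanSpace ℝ ι) :
    fderiv ℝ (fderiv ℝ (fun w : EuclideanSpace ℝ ι => ‖w‖ ^ p)) ω u v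
      = p * ((p - 2) * ⟪ω, u⟫ * ⟪ω, v⟫ + ⟪u, v⟫) := by
  have hω0 : ω ≠ 0 := by intro h; rw [h, norm_zero] at hω; norm_num at hω
  have hSω : SqE ω = 1 := by
    simp only [SqE]; rw [real_inner_self_eq_norm_sq, hω]; norm_num
  set G : EuclideanSpace ℝ ι → (EuclideanSpace ℝ ι →L[ℝ] ℝ) :=
    fun w => (p * (SqE w) ^ (p/2 - 1)) • innerSL ℝ w with hG
  have heq : fderiv ℝ (fun w : EuclideanSpace ℝ ι => ‖w‖ ^ p) =ᶠ[nhds ω] G := by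
    filter_upwards [IsOpen.mem_nhds isOpen_compl_singleton hω0] with w hw
    exact (hasFDerivAt_normRpow p w hw).fderiv
  have hc : HasFDerivAt (fun w : EuclideanSpace ℝ ι => p * (SqE w) ^ (p/2 - 1))
      ((p * ((p/2 - 1) * (SqE ω) ^ (p/2 - 1 - 1))) • ((2:ℝ) • innerSL ℝ ω)) ω := by
    have h1 := ((Real.hasDerivAt_rpow_const (x := SqE ω) (p := p/2 - 1)
      (Or.inl (SqE_ne_zero hω0))).const_mul p).comp_hasFDerivAt ω (hasFDerivAt_SqE ω)
    exact h1
  let J : EuclideanSpace ℝ ι →L[ℝ] (EuclideanSpace ℝ ι →L[ℝ] ℝ) := innerSL ℝ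
  have hf : HasFDerivAt (fun w : EuclideanSpace ℝ ι => innerSL ℝ w) J ω := J.hasFDerivAt
  have hGd : HasFDerivAt G
      ((p * (SqE ω) ^ (p/2 - 1)) • J
        + ((p * ((p/2 - 1) * (SqE ω) ^ (p/2 - 1 - 1))) • ((2:ℝ) • innerSL ℝ ω)).smulRight
            (innerSL ℝ ω)) ω := hc.smul hf
  rw [heq.fderiv_eq, hGd.fderiv]
  have hJ : ∀ a b : EuclideanSpace ℝ ι, J a b = ⟪a, b⟫ := fun a b => rfl
  simp only [hJ, hSω, Real.one_rpow, ContinuousLinearMap.add_apply,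
    ContinuousLinearMap.smul_apply, innerSL_apply_apply, ContinuousLinearMap.smulRight_apply,
    smul_eq_mul, ContinuousLinearMap.coe_smul', Pi.smul_apply]
  ring

lemma hessE_norm_rpow (p : ℝ) (ω : EuclideanSpace ℝ ι) (hω : ‖ω‖ = 1) (i j : ι) :
    iteratedFDeriv ℝ 2 (fun w : EuclideanSpace ℝ ι => ‖w‖ ^ p) ω
        ![EuclideanSpace.single i 1, EuclideanSpace.single j 1]
      = p * ((if i = j then 1 else 0) + (p - 2) * ω i * ω j) := by
  rw [iteratedFDeriv_two_apply]
  have h := fderiv_fderiv_normRpow p ω hω (EuclideanSpace.single i 1) (EuclideanSpace.single j 1)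
  simp only [Matrix.cons_val_zero, Matrix.cons_val_one, Matrix.head_cons]
  rw [h]
  simp only [EuclideanSpace.inner_single_right, EuclideanSpace.inner_single_left,
    EuclideanSpace.single_apply, conj_trivial, mul_one, one_mul]
  by_cases h : i = j
  · subst h; simp only [if_pos rfl]; ring
  · rw [if_neg h, if_neg (fun hh : j = i => h hh.symm)]; ring

end auxHess

section auxAlg

lemma inner_re {d : ℕ} (u v : EuclideanSpace ℂ (Fin d)) :
    (inner (𝕜 := ℂ) u v).re = ∑ m, ((u m).re * (v m).re + (u m).im * (v m).im) := by
  simp [PiLp.inner_apply, RCLike.inner_apply, Complex.re_sum, Complex.mul_re]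
  exact Finset.sum_congr rfl fun _ _ => by ring

noncomputable def zeta {d : ℕ} (x : Fin 2 × Fin d → ℝ) : EuclideanSpace ℂ (Fin d) :=
  WithLp.toLp 2 (fun m => (x (0, m) : ℂ) + (x (1, m) : ℂ) * Complex.I)

lemma key1 {d : ℕ} (A : Matrix (Fin d) (Fin d) ℂ) (x : Fin 2 × Fin d → ℝ) :
    ∑ a, ∑ m, (∑ b, ∑ n, realForm A.conjTranspose (a, m) (b, n) * x (b, n)) * x (a, m)
      = (inner (𝕜 := ℂ) (mulVecE A (zeta x)) (zeta x)).re := by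
  rw [inner_re]
  simp only [Fin.sum_univ_two, realForm, Matrix.conjTranspose_apply]
  norm_num
  calc ∑ m : Fin d,
        (∑ n : Fin d, (A n m).re * x (0, n) + ∑ n : Fin d, (A n m).im * x (1, n)) * x (0, m) +
      ∑ m : Fin d,
        (-∑ n : Fin d, (A n m).im * x (0, n) + ∑ n : Fin d, (A n m).re * x (1, n)) * x (1, m)
      = ∑ m : Fin d, ∑ n : Fin d,
          (((A n m).re * x (0, n) + (A n m).im * x (1, n)) * x (0, m) +
            (-((A n m).im * x (0, n)) + (A n m).re * x (1, n)) * x (1, m)) := by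
        rw [← Finset.sum_add_distrib]
        refine Finset.sum_congr rfl fun m _ => ?_
        simp only [add_mul, neg_mul, Finset.sum_mul, ← Finset.sum_add_distrib,
          ← Finset.sum_neg_distrib]
    _ = ∑ m : Fin d, ∑ n : Fin d,
          (((A m n).re * x (0, m) + (A m n).im * x (1, m)) * x (0, n) +
            (-((A m n).im * x (0, m)) + (A m n).re * x (1, m)) * x (1, n)) := Finset.sum_comm
    _ = ∑ m : Fin d, ((mulVecE A (zeta x) m).re * (zeta x m).re +
          (mulVecE A (zeta x) m).im * (zeta x m).im) := by
        refine Finset.sum_congr rfl fun m _ => ?_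
        simp only [mulVecE, zeta, Complex.re_sum, Complex.im_sum, Complex.mul_re, Complex.mul_im,
          Complex.add_re, Complex.add_im, Complex.ofReal_re, Complex.ofReal_im, Complex.I_re,
          Complex.I_im, mul_zero, mul_one, zero_mul, sub_zero, add_zero, zero_add]
        simp only [Finset.sum_mul, ← Finset.sum_add_distrib, Finset.mul_sum, sub_mul]
        exact Finset.sum_congr rfl fun n _ => by ring

lemma key2 {d : ℕ} (A : Matrix (Fin d) (Fin d) ℂ) (x : Fin 2 × Fin d → ℝ)
    (g : Fin 2 → ℝ) (Y : Fin d → ℝ) :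
    ∑ a, ∑ m, (∑ b, ∑ n, realForm A.conjTranspose (a, m) (b, n) * (g b * Y n)) * x (a, m)
      = ∑ m, Y m * ((conj ((g 0 : ℂ) + (g 1 : ℂ) * Complex.I)) * mulVecE A (zeta x) m).re := by
  simp only [Fin.sum_univ_two, realForm, Matrix.conjTranspose_apply]
  norm_num
  calc ∑ m : Fin d,
        (∑ n : Fin d, (A n m).re * (g 0 * Y n) + ∑ n : Fin d, (A n m).im * (g 1 * Y n)) * x (0, m) +
      ∑ m : Fin d,
        (-∑ n : Fin d, (A n m).im * (g 0 * Y n) + ∑ n : Fin d, (A n m).re * (g 1 * Y n)) * x (1, m)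
      = ∑ m : Fin d, ∑ n : Fin d,
          (((A n m).re * (g 0 * Y n) + (A n m).im * (g 1 * Y n)) * x (0, m) +
            (-((A n m).im * (g 0 * Y n)) + (A n m).re * (g 1 * Y n)) * x (1, m)) := by
        rw [← Finset.sum_add_distrib]
        refine Finset.sum_congr rfl fun m _ => ?_
        simp only [add_mul, neg_mul, Finset.sum_mul, ← Finset.sum_add_distrib,
          ← Finset.sum_neg_distrib]
    _ = ∑ m : Fin d, ∑ n : Fin d,
          (((A m n).re * (g 0 * Y m) + (A m n).im * (g 1 * Y m)) * x (0, n) +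
            (-((A m n).im * (g 0 * Y m)) + (A m n).re * (g 1 * Y m)) * x (1, n)) :=
        Finset.sum_comm
    _ = ∑ m, Y m * (g 0 * (mulVecE A (zeta x) m).re + g 1 * (mulVecE A (zeta x) m).im) := by
        refine Finset.sum_congr rfl fun m _ => ?_
        simp only [mulVecE, zeta, Complex.re_sum, Complex.im_sum, Complex.mul_re, Complex.mul_im,
          Complex.add_re, Complex.add_im, Complex.ofReal_re, Complex.ofReal_im, Complex.I_re,
          Complex.I_im, mul_zero, mul_one, zero_mul, sub_zero, add_zero, zero_add]
        simp only [Finset.mul_sum, Finset.sum_mul, sub_mul, mul_sub, neg_mul, mul_neg,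
          ← Finset.sum_add_distrib, ← Finset.sum_neg_distrib, ← Finset.sum_sub_distrib]
        exact Finset.sum_congr rfl fun n _ => by ring

lemma phase_conj_mul (θ : ℝ) :
    conj (Complex.exp (-(θ:ℂ) * Complex.I)) * Complex.exp (-(θ:ℂ) * Complex.I) = 1 := by
  rw [← Complex.exp_conj, ← Complex.exp_add, ← Complex.exp_zero]
  congr 1
  simp [map_mul, Complex.conj_ofReal, Complex.conj_I]

lemma abs_mul_phase (w : ℂ) :
    (‖w‖ : ℂ) * Complex.exp (-(w.arg : ℂ) * Complex.I) = conj w := by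
  conv_rhs => rw [← Complex.norm_mul_exp_arg_mul_I w]
  rw [map_mul, Complex.conj_ofReal, ← Complex.exp_conj]
  congr 2
  simp [map_mul, Complex.conj_ofReal, Complex.conj_I]

lemma mulVecE_smul {d : ℕ} (A : Matrix (Fin d) (Fin d) ℂ) (c : ℂ) (ξ : EuclideanSpace ℂ (Fin d)) :
    mulVecE A (c • ξ) = c • mulVecE A ξ := by
  ext i
  simp only [mulVecE, PiLp.smul_apply, smul_eq_mul, Finset.mul_sum]
  exact Finset.sum_congr rfl fun j _ => by ring

lemma inner_smul_smul {d : ℕ} (c : ℂ) (hc : conj c * c = 1) (u v : EuclideanSpace ℂ (Fin d)) :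
    (inner (𝕜 := ℂ) (c • u) (c • v) : ℂ) = inner (𝕜 := ℂ) u v := by
  rw [inner_smul_left, inner_smul_right, ← mul_assoc, hc, one_mul]

end auxAlg

noncomputable def wC (t0 t1 : ℝ) : ℂ := (t0 : ℂ) + (t1 : ℂ) * Complex.I

noncomputable def phaseC (z : ℂ) : ℂ := Complex.exp (-(z.arg : ℂ) * Complex.I)

noncomputable def zetaX {l d : ℕ} (X : Fin l × Fin 2 × Fin d → ℝ) (j : Fin l) :
    EuclideanSpace ℂ (Fin d) := zeta (fun bn => X (j, bn.1, bn.2))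

lemma phase_abs_smul (z : ℂ) : (‖z‖ : ℂ) * phaseC z = conj z := abs_mul_phase z

lemma conj_phase_mul (z : ℂ) : conj (phaseC z) * phaseC z = 1 := phase_conj_mul _

set_option maxHeartbeats 1000000 in
/-- the formula for `p⁻¹ H^{(A₁,…,A_l)}_{F_p}[ω;X]` with `|ω| = 1`, where
`σ_j = e^{-i arg ω_j} V_d⁻¹(X_j)`. -/
theorem stmt8 {l d : ℕ} (p : ℝ) (hp : 1 < p) (A : Fin l → Matrix (Fin d) (Fin d) ℂ)
    (ω : EuclideanSpace ℝ (Fin l × Fin 2)) (hω : ‖ω‖ = 1) (X : Fin l × Fin 2 × Fin d → ℝ)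
    (σ : Fin l → EuclideanSpace ℂ (Fin d))
    (hσ : ∀ j, σ j =
      Complex.exp (-((((ω (j, 0) : ℂ) + (ω (j, 1) : ℂ) * Complex.I).arg : ℂ)) * Complex.I) •
        (WithLp.toLp 2 (fun m => (X (j, 0, m) : ℂ) + (X (j, 1, m) : ℂ) * Complex.I) :
          EuclideanSpace ℂ (Fin d))) :
    p⁻¹ * genHess A (fun w => ‖w‖ ^ p) ω X =
      (∑ j, (@inner ℂ _ _ (mulVecE (A j) (σ j)) (σ j)).re) +
        (p - 2) * ∑ j, ∑ k,
          ‖(ω (j, 0) : ℂ) + (ω (j, 1) : ℂ) * Complex.I‖ *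
            ‖(ω (k, 0) : ℂ) + (ω (k, 1) : ℂ) * Complex.I‖ *
            (@inner ℂ _ _ (mulVecE (A j) (σ j))
              (WithLp.toLp 2 (fun m => ((σ k m).re : ℂ)) : EuclideanSpace ℂ (Fin d))).re := by
  classical
  have hp0 : p ≠ 0 := by positivity
  set Y : Fin d → ℝ := fun n => ∑ k, ∑ c, ω (k, c) * X (k, c, n) with hY
  have hσ' : ∀ j, σ j = phaseC (wC (ω (j, 0)) (ω (j, 1))) • zetaX X j := fun j => hσ j
  -- Hessian entries
  have hhess : ∀ i i' : Fin l × Fin 2,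
      hessE (fun w : EuclideanSpace ℝ (Fin l × Fin 2) => ‖w‖ ^ p) ω i i'
        = p * ((if i = i' then 1 else 0) + (p - 2) * ω i * ω i') :=
    fun i i' => hessE_norm_rpow p ω hω i i'
  -- the inner Hessian sum
  have hδ : ∀ (j : Fin l) (b : Fin 2) (n : Fin d),
      (∑ k, ∑ c, hessE (fun w : EuclideanSpace ℝ (Fin l × Fin 2) => ‖w‖ ^ p) ω (j, b) (k, c)
          * X (k, c, n))
        = p * (X (j, b, n) + (p - 2) * ω (j, b) * Y n) := by
    intro j b n
    have h1 : ∀ (k : Fin l) (c : Fin 2),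
        hessE (fun w : EuclideanSpace ℝ (Fin l × Fin 2) => ‖w‖ ^ p) ω (j, b) (k, c) * X (k, c, n)
          = p * ((if (j, b) = (k, c) then X (k, c, n) else 0)
              + (p - 2) * (ω (j, b) * (ω (k, c) * X (k, c, n)))) := by
      intro k c
      rw [hhess]
      by_cases h : (j, b) = (k, c)
      · rw [if_pos h, if_pos h]; ring
      · rw [if_neg h, if_neg h]; ring
    simp only [h1]
    simp only [← Finset.mul_sum]
    congr 1
    simp only [Finset.sum_add_distrib]
    have h2 : (∑ k : Fin l, ∑ c : Fin 2, if (j, b) = (k, c) then X (k, c, n) else 0)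
        = X (j, b, n) := by
      rw [Finset.sum_eq_single j]
      · rw [Finset.sum_eq_single b]
        · simp
        · intro c _ hc
          exact if_neg fun hEq => hc (congrArg Prod.snd hEq).symm
        · intro hb; exact absurd (Finset.mem_univ b) hb
      · intro k _ hk
        exact Finset.sum_eq_zero fun c _ => if_neg fun hEq => hk (congrArg Prod.fst hEq).symm
      · intro hj; exact absurd (Finset.mem_univ j) hj
    rw [h2]
    congr 1
    simp only [← Finset.mul_sum, hY]
    ring
  -- rewrite genHess
  have hgen : genHess A (fun w : EuclideanSpace ℝ (Fin l × Fin 2) => ‖w‖ ^ p) ω X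
      = p * ((∑ j, ∑ a, ∑ m, (∑ b, ∑ n,
            realForm (A j).conjTranspose (a, m) (b, n) * X (j, b, n)) * X (j, a, m))
          + (p - 2) * ∑ j, ∑ a, ∑ m, (∑ b, ∑ n,
            realForm (A j).conjTranspose (a, m) (b, n) * (ω (j, b) * Y n)) * X (j, a, m)) := by
    simp only [genHess, hδ]
    simp only [mul_add, Finset.mul_sum, Finset.sum_mul, add_mul, ← Finset.sum_add_distrib]
    refine Finset.sum_congr rfl fun j _ => Finset.sum_congr rfl fun a _ =>
      Finset.sum_congr rfl fun m _ => Finset.sum_congr rfl fun b _ =>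
      Finset.sum_congr rfl fun n _ => by ring
  rw [hgen, ← mul_assoc, inv_mul_cancel₀ hp0, one_mul]
  congr 1
  -- first part
  · refine Finset.sum_congr rfl fun j _ => ?_
    have hph : (inner (𝕜 := ℂ) (mulVecE (A j) (σ j)) (σ j) : ℂ)
        = inner (𝕜 := ℂ) (mulVecE (A j) (zetaX X j)) (zetaX X j) := by
      rw [hσ' j, mulVecE_smul]
      exact inner_smul_smul _ (conj_phase_mul _) _ _
    rw [hph]
    exact key1 (A j) (fun bn => X (j, bn.1, bn.2))
  -- second part
  · congr 1
    refine Finset.sum_congr rfl fun j _ => ?_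
    -- per k formula
    have h3 : ∀ k : Fin l, ‖(wC (ω (j, 0)) (ω (j, 1)))‖
          * ‖(wC (ω (k, 0)) (ω (k, 1)))‖
          * (inner (𝕜 := ℂ) (mulVecE (A j) (σ j))
              (WithLp.toLp 2 (fun m => ((σ k m).re : ℂ)) : EuclideanSpace ℂ (Fin d))).re
        = ∑ m, (conj (wC (ω (k, 0)) (ω (k, 1))) * zetaX X k m).re
            * (conj (wC (ω (j, 0)) (ω (j, 1))) * mulVecE (A j) (zetaX X j) m).re := by
      intro k
      rw [inner_re]
      simp only [Complex.ofReal_re, Complex.ofReal_im, mul_zero, add_zero]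
      rw [Finset.mul_sum]
      refine Finset.sum_congr rfl fun m _ => ?_
      have e1 : (‖(wC (ω (j, 0)) (ω (j, 1)))‖ : ℂ) * mulVecE (A j) (σ j) m
          = conj (wC (ω (j, 0)) (ω (j, 1))) * mulVecE (A j) (zetaX X j) m := by
        rw [hσ' j, mulVecE_smul]
        show (‖(wC (ω (j, 0)) (ω (j, 1)))‖ : ℂ)
          * (phaseC (wC (ω (j, 0)) (ω (j, 1))) * mulVecE (A j) (zetaX X j) m) = _
        rw [← mul_assoc, phase_abs_smul]
      have e2 : (‖(wC (ω (k, 0)) (ω (k, 1)))‖ : ℂ) * σ k m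
          = conj (wC (ω (k, 0)) (ω (k, 1))) * zetaX X k m := by
        rw [hσ' k]
        show (‖(wC (ω (k, 0)) (ω (k, 1)))‖ : ℂ)
          * (phaseC (wC (ω (k, 0)) (ω (k, 1))) * zetaX X k m) = _
        rw [← mul_assoc, phase_abs_smul]
      rw [← e1, ← e2, Complex.re_ofReal_mul, Complex.re_ofReal_mul]
      ring
    have hpart2 : (∑ k, ‖(wC (ω (j, 0)) (ω (j, 1)))‖
          * ‖(wC (ω (k, 0)) (ω (k, 1)))‖
          * (inner (𝕜 := ℂ) (mulVecE (A j) (σ j))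
              (WithLp.toLp 2 (fun m => ((σ k m).re : ℂ)) : EuclideanSpace ℂ (Fin d))).re)
        = ∑ m, Y m * (conj (wC (ω (j, 0)) (ω (j, 1))) * mulVecE (A j) (zetaX X j) m).re := by
      calc (∑ k, ‖(wC (ω (j, 0)) (ω (j, 1)))‖
            * ‖(wC (ω (k, 0)) (ω (k, 1)))‖
            * (inner (𝕜 := ℂ) (mulVecE (A j) (σ j))
                (WithLp.toLp 2 (fun m => ((σ k m).re : ℂ)) : EuclideanSpace ℂ (Fin d))).re)
          = ∑ k, ∑ m, (conj (wC (ω (k, 0)) (ω (k, 1))) * zetaX X k m).re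
              * (conj (wC (ω (j, 0)) (ω (j, 1))) * mulVecE (A j) (zetaX X j) m).re :=
            Finset.sum_congr rfl fun k _ => h3 k
        _ = ∑ m, ∑ k, (conj (wC (ω (k, 0)) (ω (k, 1))) * zetaX X k m).re
              * (conj (wC (ω (j, 0)) (ω (j, 1))) * mulVecE (A j) (zetaX X j) m).re :=
            Finset.sum_comm
        _ = ∑ m, Y m * (conj (wC (ω (j, 0)) (ω (j, 1))) * mulVecE (A j) (zetaX X j) m).re := by
            refine Finset.sum_congr rfl fun m _ => ?_
            rw [← Finset.sum_mul]
            congr 1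
            simp only [hY]
            refine Finset.sum_congr rfl fun k _ => ?_
            simp only [Fin.sum_univ_two, wC, zeta, zetaX, map_add, map_mul, Complex.conj_ofReal,
              Complex.conj_I, Complex.mul_re, Complex.add_re, Complex.add_im, Complex.ofReal_re,
              Complex.ofReal_im, Complex.mul_im, Complex.neg_re, Complex.neg_im, Complex.I_re,
              Complex.I_im]
            ring
    calc (∑ a, ∑ m, (∑ b, ∑ n,
            realForm (A j).conjTranspose (a, m) (b, n) * (ω (j, b) * Y n)) * X (j, a, m))
        = ∑ m, Y m * (conj (wC (ω (j, 0)) (ω (j, 1))) * mulVecE (A j) (zetaX X j) m).re :=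
          key2 (A j) (fun bn => X (j, bn.1, bn.2)) (fun b => ω (j, b)) Y
      _ = ∑ k, ‖(wC (ω (j, 0)) (ω (j, 1)))‖
            * ‖(wC (ω (k, 0)) (ω (k, 1)))‖
            * (inner (𝕜 := ℂ) (mulVecE (A j) (σ j))
                (WithLp.toLp 2 (fun m => ((σ k m).re : ℂ)) : EuclideanSpace ℂ (Fin d))).re := hpart2.symm
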